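/- Let k be a field, c ∈ k, and let A be the 2-dimensional k-vector space with basis {x, y} and the k-bilinear multiplication determined by x² = x, xy = 0, yx = cy, y² = 0. Let Δ : A → A ⊗ A be the linear map with Δx = x⊗x and Δy = x⊗y. Then Δ is coassociative, Δ(ab) = Δ(a)Δ(b) for all a, b ∈ A, and the self-distributivity identity holds: for all a, b ∈ A, (a·b)·x = (a·x)·(b·x) and (a·b)·y = (a·x)·(b·y). -/

import Mathlib

open TensorProduct in
/-- The 2-dimensional algebra with basis `{x, y}`,
multiplication `x² = x, xy = 0, yx = c•y, y² = 0` and comultiplication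
`Δx = x⊗x, Δy = x⊗y` is a (non-counital) self-distributive bialgebra. -/
theorem stmt_4 (k A : Type*) [Field k] (c : k)
    [NonUnitalNonAssocRing A] [Module k A]
    [SMulCommClass k A A] [IsScalarTower k A A]
    (B : Module.Basis (Fin 2) k A) (x y : A) (hx : x = B 0) (hy : y = B 1)
    (hxx : x * x = x) (hxy : x * y = 0) (hyx : y * x = c • y) (hyy : y * y = 0)
    (Δ : A →ₗ[k] A ⊗[k] A)
    (hΔx : Δ x = x ⊗ₜ[k] x) (hΔy : Δ y = x ⊗ₜ[k] y) :
    ((TensorProduct.assoc k A A A).toLinearMap ∘ₗ Δ.rTensor A ∘ₗ Δ = Δ.lTensor A ∘ₗ Δ)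
    ∧ (∀ a b : A, Δ (a * b) = Δ a * Δ b)
    ∧ (∀ a b : A, (a * b) * x = (a * x) * (b * x) ∧ (a * b) * y = (a * x) * (b * y)) := by
  have hrep : ∀ a : A, a = B.repr a 0 • x + B.repr a 1 • y := by
    intro a
    have h := B.sum_repr a
    rw [Fin.sum_univ_two] at h
    rw [hx, hy, h]
  refine ⟨?_, ?_, ?_⟩
  · apply B.ext
    intro i
    fin_cases i
    · simp [← hx, hΔx, hΔy]
    · simp [← hy, ← hx, hΔx, hΔy]
  · intro a b
    rw [hrep a, hrep b]
    simp only [mul_add, add_mul, smul_mul_assoc, mul_smul_comm, hxx, hxy, hyx, hyy,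
      smul_zero, add_zero, zero_add, map_add, map_smul, hΔx, hΔy, smul_smul,
      Algebra.TensorProduct.tmul_mul_tmul, smul_add, tmul_smul, ← smul_tmul', tmul_zero, zero_tmul]
  · intro a b
    rw [hrep a, hrep b]
    constructor <;>
      simp only [mul_add, add_mul, smul_mul_assoc, mul_smul_comm, hxx, hxy, hyx, hyy,
        smul_zero, add_zero, zero_add, zero_mul, mul_zero, smul_smul]
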